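/- Let $R = k[x_1,\dots,x_m]$ and $I$ a monomial ideal that is ${}^*$strongly Golod, i.e. $\partial^*(I)^2 \subseteq I$. Then for every $s \ge 2$, the power $I^s$ is ${}^*$strongly Golod, i.e. $\partial^*(I^s)^2 \subseteq I^s$. -/

import Mathlib

open MvPolynomial

variable {m : ℕ} {k : Type*}

/-- An ideal of `k[x_1, …, x_m]` is a monomial ideal if it is generated by monomials. -/
def IsMonomialIdeal [Field k] (I : Ideal (MvPolynomial (Fin m) k)) : Prop :=
  ∃ S : Set (Fin m →₀ ℕ), I = Ideal.span ((fun e => monomial e (1 : k)) '' S)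

/-- `e` is the exponent vector of a minimal monomial generator of `I`: the monomial `x^e`
lies in `I` and no proper divisor of it lies in `I`. -/
def IsMinMonomialGen [Field k] (I : Ideal (MvPolynomial (Fin m) k)) (e : Fin m →₀ ℕ) : Prop :=
  monomial e (1 : k) ∈ I ∧ ∀ e' : Fin m →₀ ℕ, e' ≤ e → e' ≠ e → monomial e' (1 : k) ∉ I

/-- `∂*(I)`: the ideal generated by all quotients `f / x_i`, where `f` runs over the minimal
monomial generators of `I` and `x_i` over the variables dividing `f`. -/
noncomputable def partialStar [Field k] (I : Ideal (MvPolynomial (Fin m) k)) :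
    Ideal (MvPolynomial (Fin m) k) :=
  Ideal.span { p | ∃ (e : Fin m →₀ ℕ) (i : Fin m), IsMinMonomialGen I e ∧ e i ≠ 0 ∧
    p = monomial (e - Finsupp.single i 1) (1 : k) }

open Pointwise

/-- the `n`-fold sumset of `S` -/
def sumNSet (S : Set (Fin m →₀ ℕ)) : ℕ → Set (Fin m →₀ ℕ)
  | 0 => {0}
  | n + 1 => S + sumNSet S n

lemma image_monomial_mul [Field k] (S T : Set (Fin m →₀ ℕ)) :
    ((fun e => (monomial e (1 : k) : MvPolynomial (Fin m) k)) '' S) *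
      ((fun e => monomial e (1 : k)) '' T)
      = (fun e => monomial e (1 : k)) '' (S + T) := by
  ext p
  constructor
  · rintro ⟨_, ⟨a, ha, rfl⟩, _, ⟨b, hb, rfl⟩, rfl⟩
    exact ⟨a + b, Set.add_mem_add ha hb, by simp [monomial_mul]⟩
  · rintro ⟨c, ⟨a, ha, b, hb, rfl⟩, rfl⟩
    exact ⟨_, ⟨a, ha, rfl⟩, _, ⟨b, hb, rfl⟩, by simp [monomial_mul]⟩

lemma span_monomial_pow [Field k] (S : Set (Fin m →₀ ℕ)) (n : ℕ) :
    (Ideal.span ((fun e => (monomial e (1 : k) : MvPolynomial (Fin m) k)) '' S)) ^ n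
      = Ideal.span ((fun e => monomial e (1 : k)) '' sumNSet S n) := by
  induction n with
  | zero =>
      rw [pow_zero, sumNSet]
      rw [Set.image_singleton]
      simp [Ideal.span_singleton_one]
  | succ n ih =>
      rw [pow_succ', ih, Ideal.span_mul_span', image_monomial_mul, sumNSet]

lemma mem_sumNSet {S : Set (Fin m →₀ ℕ)} :
    ∀ {n : ℕ} {e : Fin m →₀ ℕ}, e ∈ sumNSet S n →
      ∃ g : Fin n → (Fin m →₀ ℕ), (∀ l, g l ∈ S) ∧ e = ∑ l, g l := by
  intro n
  induction n with
  | zero =>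
      intro e he
      refine ⟨Fin.elim0, fun l => l.elim0, ?_⟩
      simpa [sumNSet] using he
  | succ n ih =>
      rintro e ⟨a, ha, b, hb, rfl⟩
      obtain ⟨g, hg, rfl⟩ := ih hb
      refine ⟨Fin.cons a g, ?_, ?_⟩
      · intro l
        refine Fin.cases ?_ ?_ l
        · exact ha
        · exact fun i => hg i
      · rw [Fin.sum_cons]

lemma monomial_sum_mem_pow [Field k] (I : Ideal (MvPolynomial (Fin m) k)) {ι : Type*}
    [DecidableEq ι] (t : Finset ι) (g : ι → (Fin m →₀ ℕ))
    (h : ∀ l ∈ t, monomial (g l) (1 : k) ∈ I) :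
    monomial (∑ l ∈ t, g l) (1 : k) ∈ I ^ t.card := by
  induction t using Finset.induction with
  | empty => simp
  | insert a t' hna ih =>
      rw [Finset.sum_insert hna, Finset.card_insert_of_notMem hna, pow_succ']
      have : (monomial (g a + ∑ l ∈ t', g l) (1 : k)) =
          monomial (g a) 1 * monomial (∑ l ∈ t', g l) 1 := by
        rw [monomial_mul, one_mul]
      rw [this]
      exact Ideal.mul_mem_mul (h a (Finset.mem_insert_self a t'))
        (ih fun l hl => h l (Finset.mem_insert_of_mem hl))

lemma exists_min_le [Field k] (I : Ideal (MvPolynomial (Fin m) k)) :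
    ∀ (n : ℕ) (e : Fin m →₀ ℕ), (∑ i, e i) = n → monomial e (1 : k) ∈ I →
      ∃ e', e' ≤ e ∧ IsMinMonomialGen I e' := by
  intro n
  induction n using Nat.strong_induction_on with
  | _ n ih =>
    intro e hdeg he
    by_cases hmin : IsMinMonomialGen I e
    · exact ⟨e, le_rfl, hmin⟩
    · simp only [IsMinMonomialGen, not_and, not_forall, not_not] at hmin
      obtain ⟨e', hle, hne, he'⟩ := hmin he
      have hle' : ∀ i, e' i ≤ e i := fun i => hle i
      have hlt : (∑ i, e' i) < n := by
        rw [← hdeg]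
        refine Finset.sum_lt_sum (fun i _ => hle' i) ?_
        obtain ⟨i, hi⟩ : ∃ i, e' i ≠ e i := by
          by_contra hc
          push_neg at hc
          exact hne (Finsupp.ext hc)
        exact ⟨i, Finset.mem_univ i, lt_of_le_of_ne (hle' i) hi⟩
      obtain ⟨e'', h1, h2⟩ := ih _ hlt e' rfl he'
      exact ⟨e'', h1.trans hle, h2⟩

lemma mingen_pow [Field k] {I : Ideal (MvPolynomial (Fin m) k)}
    (hmon : IsMonomialIdeal I) (s : ℕ) {e : Fin m →₀ ℕ}
    (h : IsMinMonomialGen (I ^ s) e) :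
    ∃ g : Fin s → (Fin m →₀ ℕ), (∀ l, IsMinMonomialGen I (g l)) ∧ e = ∑ l, g l := by
  classical
  obtain ⟨S, rfl⟩ := hmon
  have hmem := h.1
  rw [span_monomial_pow, mem_ideal_span_monomial_image] at hmem
  have hsup : e ∈ (monomial e (1 : k)).support := by
    rw [support_monomial, if_neg (one_ne_zero (α := k))]
    exact Finset.mem_singleton_self e
  obtain ⟨t, ht, hte⟩ := hmem e hsup
  obtain ⟨g, hgS, rfl⟩ := mem_sumNSet ht
  have hgI : ∀ l, monomial (g l) (1 : k) ∈ Ideal.span ((fun e => monomial e (1 : k)) '' S) :=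
    fun l => Ideal.subset_span ⟨g l, hgS l, rfl⟩
  -- the sum equals e by minimality
  have hsum_mem : monomial (∑ l, g l) (1 : k) ∈
      (Ideal.span ((fun e => monomial e (1 : k)) '' S)) ^ s := by
    have := monomial_sum_mem_pow _ Finset.univ g (fun l _ => hgI l)
    simpa using this
  have hte' : (∑ l, g l) = e := by
    by_contra hc
    exact h.2 _ hte hc hsum_mem
  -- upgrade each g l to a minimal generator
  have hmin : ∀ l, ∃ g', g' ≤ g l ∧
      IsMinMonomialGen (Ideal.span ((fun e => monomial e (1 : k)) '' S)) g' :=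
    fun l => exists_min_le _ _ _ rfl (hgI l)
  choose g' hg'le hg'min using hmin
  have hle2 : (∑ l, g' l) ≤ ∑ l, g l := Finset.sum_le_sum fun l _ => hg'le l
  have hmem2 : monomial (∑ l, g' l) (1 : k) ∈
      (Ideal.span ((fun e => monomial e (1 : k)) '' S)) ^ s := by
    have := monomial_sum_mem_pow _ Finset.univ g' (fun l _ => (hg'min l).1)
    simpa using this
  have heq2 : (∑ l, g' l) = e := by
    by_contra hc
    exact h.2 _ (hte' ▸ hle2) hc hmem2
  exact ⟨g', hg'min, heq2.symm⟩

/-- If `I` is a `*`strongly Golod monomial ideal (`∂*(I)² ⊆ I`), then for every `s ≥ 2`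
the power `I^s` is `*`strongly Golod: `∂*(I^s)² ⊆ I^s`. -/
theorem pow_strongly_golod [Field k] (I : Ideal (MvPolynomial (Fin m) k))
    (hmon : IsMonomialIdeal I) (hsg : partialStar I * partialStar I ≤ I)
    (s : ℕ) (hs : 2 ≤ s) :
    partialStar (I ^ s) * partialStar (I ^ s) ≤ I ^ s := by
  rw [partialStar, Ideal.span_mul_span', Ideal.span_le]
  rintro _ ⟨p, hp, q, hq, rfl⟩
  obtain ⟨e, i, hme, hei, rfl⟩ := hp
  obtain ⟨f, j, hmf, hfj, rfl⟩ := hq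
  obtain ⟨g, hg, rfl⟩ := mingen_pow hmon s hme
  obtain ⟨h, hh, rfl⟩ := mingen_pow hmon s hmf
  -- pick factors divisible by the respective variables
  obtain ⟨a, _, hai⟩ : ∃ a ∈ Finset.univ, g a i ≠ 0 := by
    refine Finset.exists_ne_zero_of_sum_ne_zero ?_
    simpa [Finsupp.finset_sum_apply] using hei
  obtain ⟨b, _, hbj⟩ : ∃ b ∈ Finset.univ, h b j ≠ 0 := by
    refine Finset.exists_ne_zero_of_sum_ne_zero ?_
    simpa [Finsupp.finset_sum_apply] using hfj
  -- rewrite the exponent vectors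
  have hkey1 : (∑ l, g l) - Finsupp.single i 1
      = (g a - Finsupp.single i 1) + ∑ l ∈ Finset.univ.erase a, g l := by
    rw [Finsupp.sub_single_one_add hai, Finset.add_sum_erase _ _ (Finset.mem_univ a)]
  have hkey2 : (∑ l, h l) - Finsupp.single j 1
      = (h b - Finsupp.single j 1) + ∑ l ∈ Finset.univ.erase b, h l := by
    rw [Finsupp.sub_single_one_add hbj, Finset.add_sum_erase _ _ (Finset.mem_univ b)]
  have hsplit : ∀ (A B : Fin m →₀ ℕ),
      (monomial (A + B) (1 : k) : MvPolynomial (Fin m) k)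
        = monomial A 1 * monomial B 1 := by
    intro A B
    rw [monomial_mul, one_mul]
  rw [hkey1, hkey2, hsplit, hsplit]
  beta_reduce
  rw [mul_mul_mul_comm]
  -- memberships
  have h1 : monomial (g a - Finsupp.single i 1) (1 : k)
      * monomial (h b - Finsupp.single j 1) 1 ∈ I :=
    hsg (Ideal.mul_mem_mul
      (Ideal.subset_span ⟨g a, i, hg a, hai, rfl⟩)
      (Ideal.subset_span ⟨h b, j, hh b, hbj, rfl⟩))
  have h2 : monomial (∑ l ∈ Finset.univ.erase a, g l) (1 : k)
      ∈ I ^ (Finset.univ.erase a).card :=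
    monomial_sum_mem_pow _ _ _ (fun l _ => (hg l).1)
  have h3 : monomial (∑ l ∈ Finset.univ.erase b, h l) (1 : k)
      ∈ I ^ (Finset.univ.erase b).card :=
    monomial_sum_mem_pow _ _ _ (fun l _ => (hh l).1)
  have hcard : (Finset.univ.erase a).card = s - 1 ∧ (Finset.univ.erase b).card = s - 1 := by
    constructor <;>
      rw [Finset.card_erase_of_mem (Finset.mem_univ _), Finset.card_univ, Fintype.card_fin]
  have hmemb := Ideal.mul_mem_mul h1 (Ideal.mul_mem_mul h2 h3)
  rw [hcard.1, hcard.2] at hmemb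
  have hle : I * (I ^ (s - 1) * I ^ (s - 1)) ≤ I ^ s := by
    have heq : I * (I ^ (s - 1) * I ^ (s - 1)) = I ^ (1 + ((s - 1) + (s - 1))) := by
      rw [pow_add, pow_add, pow_one]
    rw [heq]
    exact Ideal.pow_le_pow_right (by omega)
  exact hle hmemb
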